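/- arXiv:2302.08411 — 2 statements merged into one kernel-verified Lean document; each statement's English description precedes it below -/
import Mathlib

section
/- (Tweedie's formula / Miyasawa) Let X be a random vector on ℝ^d with density f_X, let Y = X + σN with N ~ N(0, Id) independent of X, and let f_Y = G_{0,σ²Id} * f_X be the (smooth, positive) density of Y. Then the conditional expectation satisfies E[X | Y = y] = y + σ² ∇ log f_Y(y). -/
open MeasureTheory Real

/-- The isotropic Gaussian density `G_{0,σ²Id}` on `ℝ^d`. -/
noncomputable def isoGauss (d : ℕ) (σ : ℝ) (x : EuclideanSpace ℝ (Fin d)) : ℝ :=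
  (2 * Real.pi * σ ^ 2) ^ (-(d : ℝ) / 2) * Real.exp (-‖x‖ ^ 2 / (2 * σ ^ 2))

lemma isoGauss_nonneg (d : ℕ) (σ : ℝ) (hσ : 0 < σ) (x : EuclideanSpace ℝ (Fin d)) :
    0 ≤ isoGauss d σ x := by
  unfold isoGauss
  have : (0:ℝ) < 2 * Real.pi * σ ^ 2 := by positivity
  positivity

lemma isoGauss_le (d : ℕ) (σ : ℝ) (hσ : 0 < σ) (x : EuclideanSpace ℝ (Fin d)) :
    isoGauss d σ x ≤ (2 * Real.pi * σ ^ 2) ^ (-(d : ℝ) / 2) := by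
  unfold isoGauss
  have hc : (0:ℝ) < (2 * Real.pi * σ ^ 2) ^ (-(d : ℝ) / 2) := by positivity
  have : Real.exp (-‖x‖ ^ 2 / (2 * σ ^ 2)) ≤ 1 := by
    rw [Real.exp_le_one_iff]
    apply div_nonpos_of_nonpos_of_nonneg
    · simp [sq_nonneg]
    · positivity
  nlinarith

lemma norm_mul_isoGauss_le (d : ℕ) (σ : ℝ) (hσ : 0 < σ) (x : EuclideanSpace ℝ (Fin d)) :
    ‖x‖ * isoGauss d σ x ≤ (2 * Real.pi * σ ^ 2) ^ (-(d : ℝ) / 2) * σ := by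
  unfold isoGauss
  have hc : (0:ℝ) < (2 * Real.pi * σ ^ 2) ^ (-(d : ℝ) / 2) := by positivity
  have key : ‖x‖ * Real.exp (-‖x‖ ^ 2 / (2 * σ ^ 2)) ≤ σ := by
    have hu : Real.exp (-‖x‖ ^ 2 / (2 * σ ^ 2)) = (Real.exp (‖x‖ ^ 2 / (2 * σ ^ 2)))⁻¹ := by
      rw [neg_div, Real.exp_neg]
    rw [hu, mul_inv_le_iff₀ (Real.exp_pos _)]
    have h1 := Real.add_one_le_exp (‖x‖ ^ 2 / (2 * σ ^ 2))
    have h2 : ‖x‖ ≤ σ * (‖x‖ ^ 2 / (2 * σ ^ 2) + 1) := by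
      have e : σ * (‖x‖ ^ 2 / (2 * σ ^ 2) + 1) = (2 * σ ^ 2 + ‖x‖ ^ 2) / (2 * σ) := by
        field_simp; ring
      rw [e, le_div_iff₀ (by positivity)]
      nlinarith [sq_nonneg (‖x‖ - σ)]
    calc ‖x‖ ≤ σ * (‖x‖ ^ 2 / (2 * σ ^ 2) + 1) := h2
      _ ≤ σ * Real.exp (‖x‖ ^ 2 / (2 * σ ^ 2)) := by nlinarith
  calc ‖x‖ * ((2 * Real.pi * σ ^ 2) ^ (-(d : ℝ) / 2) * Real.exp (-‖x‖ ^ 2 / (2 * σ ^ 2)))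
      = (2 * Real.pi * σ ^ 2) ^ (-(d : ℝ) / 2) * (‖x‖ * Real.exp (-‖x‖ ^ 2 / (2 * σ ^ 2))) := by
        ring
    _ ≤ _ := by nlinarith

lemma continuous_isoGauss (d : ℕ) (σ : ℝ) : Continuous (isoGauss d σ) := by
  unfold isoGauss
  exact continuous_const.mul (Real.continuous_exp.comp (by fun_prop))

lemma hasFDerivAt_isoGauss (d : ℕ) (σ : ℝ) (hσ : 0 < σ) (w : EuclideanSpace ℝ (Fin d)) :
    HasFDerivAt (isoGauss d σ) ((-(σ ^ 2)⁻¹ * isoGauss d σ w) • innerSL ℝ w) w := by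
  have h1 : HasFDerivAt (fun w : EuclideanSpace ℝ (Fin d) => ‖w‖ ^ 2)
      (2 • innerSL ℝ w) w := by
    simpa using (hasFDerivAt_id w).norm_sq
  have hfun : (fun w : EuclideanSpace ℝ (Fin d) => -‖w‖ ^ 2 / (2 * σ ^ 2))
      = (fun w : EuclideanSpace ℝ (Fin d) => (-(2 * σ ^ 2)⁻¹ : ℝ) • ‖w‖ ^ 2) := by
    funext w; simp [smul_eq_mul]; ring
  have h2 : HasFDerivAt (fun w : EuclideanSpace ℝ (Fin d) => (-(2 * σ ^ 2)⁻¹ : ℝ) • ‖w‖ ^ 2) _ w :=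
    h1.const_smul (-(2 * σ ^ 2)⁻¹ : ℝ)
  rw [← hfun] at h2
  have h3 := (Real.hasDerivAt_exp (-‖w‖ ^ 2 / (2 * σ ^ 2))).comp_hasFDerivAt w h2
  have h4 := h3.const_mul ((2 * Real.pi * σ ^ 2) ^ (-(d : ℝ) / 2))
  refine HasFDerivAt.congr_fderiv h4 ?_
  ext z
  simp [isoGauss, Function.comp]
  ring

set_option maxHeartbeats 1000000 in
set_option synthInstance.maxHeartbeats 400000 in
/-- (Tweedie's formula / Miyasawa) If `Y = X + σN` with `N ~ N(0,Id)` independent of `X`,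
and `f_Y = G_{0,σ²Id} * f_X` is the (positive) density of `Y`, then the Bayesian least-squares
estimator satisfies `E[X | Y = y] = y + σ² ∇ log f_Y(y)`. -/
theorem tweedie_formula (d : ℕ) (σ : ℝ) (hσ : 0 < σ)
    (fX : EuclideanSpace ℝ (Fin d) → ℝ) (hmeas : Measurable fX)
    (hnonneg : ∀ x, 0 ≤ fX x) (hprob : ∫ x, fX x = 1)
    (fY : EuclideanSpace ℝ (Fin d) → ℝ)
    (hfY : ∀ y, fY y = ∫ x, isoGauss d σ (y - x) * fX x)
    (hpos : ∀ y, 0 < fY y) :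
    ∀ y : EuclideanSpace ℝ (Fin d),
      (fY y)⁻¹ • (∫ x, (isoGauss d σ (y - x) * fX x) • x)
        = y + σ ^ 2 • gradient (fun z => Real.log (fY z)) y := by
  intro y
  set c : ℝ := (2 * Real.pi * σ ^ 2) ^ (-(d : ℝ) / 2) with hc
  have hcpos : (0:ℝ) < c := by rw [hc]; positivity
  have hfX_int : Integrable fX := integrable_of_integral_eq_one hprob
  set g : EuclideanSpace ℝ (Fin d) → EuclideanSpace ℝ (Fin d) → ℝ :=
    fun z x => isoGauss d σ (z - x) * fX x with hg
  have hgmeas : ∀ z, AEStronglyMeasurable (fun x => g z x) volume := fun z =>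
    (((continuous_isoGauss d σ).comp (continuous_const.sub continuous_id)).aestronglyMeasurable).mul
      hmeas.aestronglyMeasurable
  have hgnn : ∀ z x, 0 ≤ g z x := fun z x =>
    mul_nonneg (isoGauss_nonneg d σ hσ _) (hnonneg x)
  have hI1 : ∀ z, Integrable (fun x => g z x) := by
    intro z
    refine (hfX_int.const_mul c).mono' (hgmeas z) ?_
    filter_upwards with x
    rw [Real.norm_eq_abs, abs_of_nonneg (hgnn z x)]
    exact mul_le_mul_of_nonneg_right (isoGauss_le d σ hσ _) (hnonneg x)
  have hI2 : Integrable (fun x => (g y x) • x) := by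
    refine (hfX_int.const_mul (c * σ + c * ‖y‖)).mono'
      ((hgmeas y).smul aestronglyMeasurable_id) ?_
    filter_upwards with x
    rw [norm_smul, Real.norm_eq_abs, abs_of_nonneg (hgnn y x)]
    have hx : ‖x‖ ≤ ‖y - x‖ + ‖y‖ := by
      have h := norm_sub_le y (y - x); rw [sub_sub_cancel] at h; linarith
    have b1 := norm_mul_isoGauss_le d σ hσ (y - x)
    have b2 := isoGauss_le d σ hσ (y - x)
    calc g y x * ‖x‖ ≤ g y x * (‖y - x‖ + ‖y‖) :=
          mul_le_mul_of_nonneg_left hx (hgnn y x)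
      _ = (‖y - x‖ * isoGauss d σ (y - x)) * fX x
            + (isoGauss d σ (y - x) * ‖y‖) * fX x := by simp only [hg]; ring
      _ ≤ (c * σ) * fX x + (c * ‖y‖) * fX x :=
          add_le_add (mul_le_mul_of_nonneg_right b1 (hnonneg x))
            (mul_le_mul_of_nonneg_right
              (mul_le_mul_of_nonneg_right b2 (norm_nonneg y)) (hnonneg x))
      _ = (c * σ + c * ‖y‖) * fX x := by ring
  have hI3 : Integrable (fun x => (g y x) • (y - x)) := by
    refine (hfX_int.const_mul (c * σ)).mono'
      ((hgmeas y).smul (continuous_const.sub continuous_id).aestronglyMeasurable) ?_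
    filter_upwards with x
    rw [norm_smul, Real.norm_eq_abs, abs_of_nonneg (hgnn y x)]
    calc g y x * ‖y - x‖ = (‖y - x‖ * isoGauss d σ (y - x)) * fX x := by
          simp only [hg]; ring
      _ ≤ (c * σ) * fX x :=
          mul_le_mul_of_nonneg_right (norm_mul_isoGauss_le d σ hσ _) (hnonneg x)
  set F' : EuclideanSpace ℝ (Fin d) → EuclideanSpace ℝ (Fin d) →
      (EuclideanSpace ℝ (Fin d) →L[ℝ] ℝ) :=
    fun z x => (-(σ ^ 2)⁻¹ * g z x) • innerSL ℝ (z - x) with hF'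
  have hderiv : ∀ x z, HasFDerivAt (fun z => g z x) (F' z x) z := by
    intro x z
    have h1 : HasFDerivAt (fun z : EuclideanSpace ℝ (Fin d) => z - x)
        (ContinuousLinearMap.id ℝ (EuclideanSpace ℝ (Fin d))) z := by
      simpa using (hasFDerivAt_id z).sub_const x
    have h2 := ((hasFDerivAt_isoGauss d σ hσ (z - x)).comp z h1).mul_const (fX x)
    refine HasFDerivAt.congr_fderiv h2 ?_
    ext v
    simp [hF', hg]
    ring
  have hFmain : HasFDerivAt (fun z => ∫ x, g z x) (∫ x, F' y x) y := by
    apply hasFDerivAt_integral_of_dominated_of_fderiv_le (s := Metric.ball y 1)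
      (bound := fun x => ((σ ^ 2)⁻¹ * c * σ) * fX x) (Metric.ball_mem_nhds y one_pos)
      (Filter.Eventually.of_forall fun z => hgmeas z) (hI1 y)
    · exact ((aestronglyMeasurable_const.mul (hgmeas y)).smul
        (((innerSL ℝ (E := EuclideanSpace ℝ (Fin d))).continuous.comp
          (continuous_const.sub continuous_id)).aestronglyMeasurable))
    · filter_upwards with x z _
      have hnorm : ‖F' z x‖ = (σ ^ 2)⁻¹ * g z x * ‖z - x‖ := by
        simp only [hF']
        rw [norm_smul (α := ℝ) (β := EuclideanSpace ℝ (Fin d) →L[ℝ] ℝ)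
            (-(σ ^ 2)⁻¹ * g z x) (innerSL ℝ (z - x)),
          innerSL_apply_norm, Real.norm_eq_abs, abs_mul, abs_neg,
          abs_of_nonneg (by positivity : (0:ℝ) ≤ (σ ^ 2)⁻¹), abs_of_nonneg (hgnn z x)]
      rw [hnorm]
      calc (σ ^ 2)⁻¹ * g z x * ‖z - x‖
          = (σ ^ 2)⁻¹ * ((‖z - x‖ * isoGauss d σ (z - x)) * fX x) := by simp only [hg]; ring
        _ ≤ (σ ^ 2)⁻¹ * ((c * σ) * fX x) :=
            mul_le_mul_of_nonneg_left
              (mul_le_mul_of_nonneg_right (norm_mul_isoGauss_le d σ hσ _) (hnonneg x))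
              (by positivity)
        _ = ((σ ^ 2)⁻¹ * c * σ) * fX x := by ring
    · exact (hfX_int.const_mul _)
    · filter_upwards with x z _; exact hderiv x z
  have hfYfun : fY = fun z => ∫ x, g z x := funext hfY
  rw [← hfYfun] at hFmain
  set v : EuclideanSpace ℝ (Fin d) := ∫ x, (-(σ ^ 2)⁻¹ * g y x) • (y - x) with hv
  have hIv : Integrable (fun x => (-(σ ^ 2)⁻¹ * g y x) • (y - x)) := by
    have e : (fun x => (-(σ ^ 2)⁻¹ * g y x) • (y - x))
        = fun x => (-(σ ^ 2)⁻¹ : ℝ) • ((g y x) • (y - x)) := by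
      funext x; rw [smul_smul]
    rw [e]; exact hI3.smul (-(σ ^ 2)⁻¹ : ℝ)
  have hTv : (∫ x, F' y x) = innerSL ℝ v := by
    rw [hv, ← ContinuousLinearMap.integral_comp_comm
      (innerSL ℝ (E := EuclideanSpace ℝ (Fin d))) hIv]
    congr 1
    funext x
    simp only [hF']
    rw [_root_.map_smul]
  rw [hTv] at hFmain
  have hlog : HasGradientAt (fun z => Real.log (fY z)) ((fY y)⁻¹ • v) y := by
    rw [hasGradientAt_iff_hasFDerivAt]
    have h := (Real.hasDerivAt_log (hpos y).ne').comp_hasFDerivAt y hFmain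
    have he : InnerProductSpace.toDual ℝ (EuclideanSpace ℝ (Fin d)) ((fY y)⁻¹ • v)
        = (fY y)⁻¹ • innerSL ℝ v := by
      ext z
      simp [InnerProductSpace.toDual_apply_apply]
    rw [he]
    exact h
  rw [hlog.gradient]
  have hsplit : v = (-(σ ^ 2)⁻¹ : ℝ) • ((fY y) • y - ∫ x, (g y x) • x) := by
    rw [hv]
    have e1 : (fun x => (-(σ ^ 2)⁻¹ * g y x) • (y - x))
        = fun x => (-(σ ^ 2)⁻¹ : ℝ) • ((g y x) • (y - x)) := by
      funext x; rw [smul_smul]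
    rw [e1, integral_smul]
    congr 1
    have e2 : (fun x => (g y x) • (y - x)) = fun x => (g y x) • y - (g y x) • x := by
      funext x; rw [smul_sub]
    rw [e2, integral_sub ((hI1 y).smul_const y) hI2, integral_smul_const, ← hfY y]
  rw [hsplit]
  have hfy0 : fY y ≠ 0 := (hpos y).ne'
  have hσ0 : σ ^ 2 ≠ 0 := by positivity
  rw [smul_smul, smul_smul, smul_sub, smul_smul]
  have e3 : σ ^ 2 * (fY y)⁻¹ * -(σ ^ 2)⁻¹ * fY y = -1 := by
    field_simp
  have e4 : σ ^ 2 * (fY y)⁻¹ * -(σ ^ 2)⁻¹ = -(fY y)⁻¹ := by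
    field_simp
  rw [e3, e4, neg_smul, neg_smul, one_smul]
  show (fY y)⁻¹ • (∫ x, g y x • x) = _
  abel
end

section
/- (Fixed points of the alternating scheme are critical) Let K̃ ∈ ℝ^{n×n}, and suppose (U, Σ) is a fixed point of the alternating minimization: Σ = diag-part of UᵀK̃ (i.e. Σ_{i,i} = (UᵀK̃)_{i,i}) and U = U^Σ (V^Σ)ᵀ where K̃Σ = U^Σ D (V^Σ)ᵀ is an SVD. Then for every M tangent to SO(n) at U (i.e. MᵀU + UᵀM = 0), one has ⟨∇f(U), M⟩_F = 0, where f(U) = −Σ_i (UᵀK̃)_{i,i}²; that is, U is a critical point of f on SO(n). -/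
open Matrix Finset

/-- (Fixed points of the alternating scheme are critical) If `(U, Σ)` is a fixed point of the
alternating minimization, i.e. `Σ = diag((UᵀK̃)_{ii})` and `U = U^Σ (V^Σ)ᵀ` for an SVD
`K̃Σ = U^Σ D (V^Σ)ᵀ`, then `⟨∇f(U), M⟩_F = 0` for every tangent vector `M` to `SO(n)` at `U`,
where `∇f(U) = −2 K̃ Σ` is the gradient of `f(U) = −Σ_i (UᵀK̃)_{ii}²`. -/
theorem fixed_point_is_critical (n : ℕ)
    (Kt U : Matrix (Fin n) (Fin n) ℝ)
    (hUorth : Uᵀ * U = 1) (hUdet : U.det = 1)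
    (S : Matrix (Fin n) (Fin n) ℝ)
    (hS : S = Matrix.diagonal fun i => (Uᵀ * Kt) i i)
    (US VS D : Matrix (Fin n) (Fin n) ℝ)
    (hUS : USᵀ * US = 1) (hVS : VSᵀ * VS = 1)
    (hDdiag : ∀ i j, i ≠ j → D i j = 0) (hDnn : ∀ i, 0 ≤ D i i)
    (hSVD : Kt * S = US * D * VSᵀ)
    (hfix : U = US * VSᵀ) :
    ∀ M : Matrix (Fin n) (Fin n) ℝ, Mᵀ * U + Uᵀ * M = 0 →
      ((((-2 : ℝ) • (Kt * S))ᵀ) * M).trace = 0 := by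
  intro M hM
  have hVSVS : VS * VSᵀ = 1 := mul_eq_one_comm.mp hVS
  have hDsym : Dᵀ = D := by
    ext i j
    by_cases h : i = j
    · subst h; simp [Matrix.transpose_apply]
    · simp [Matrix.transpose_apply, hDdiag i j h, hDdiag j i (Ne.symm h)]
  set A := VS * D * VSᵀ with hA
  have hAsym : Aᵀ = A := by
    simp [hA, Matrix.transpose_mul, hDsym, Matrix.mul_assoc]
  have hUA : Kt * S = U * A := by
    rw [hfix, hA, hSVD]
    calc US * D * VSᵀ = US * (1 : Matrix (Fin n) (Fin n) ℝ) * D * VSᵀ := by simp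
    _ = US * (VSᵀ * VS) * D * VSᵀ := by rw [hVS]
    _ = US * VSᵀ * (VS * D * VSᵀ) := by noncomm_ring
  set B := Uᵀ * M with hB
  have hBskew : Bᵀ = -B := by
    have : Mᵀ * U = -(Uᵀ * M) := by rw [eq_neg_iff_add_eq_zero]; exact hM
    simp [hB, Matrix.transpose_mul, this]
  have key : ((Kt * S)ᵀ * M).trace = 0 := by
    have h1 : (Kt * S)ᵀ * M = A * B := by
      rw [hUA, Matrix.transpose_mul, hAsym, Matrix.mul_assoc, hB]
    have h2 : (A * B).trace = -(A * B).trace := by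
      conv_lhs => rw [← Matrix.trace_transpose, Matrix.transpose_mul, hBskew, hAsym,
        Matrix.neg_mul, Matrix.trace_neg, Matrix.trace_mul_comm]
    rw [h1]
    linarith
  rw [Matrix.transpose_smul, Matrix.smul_mul, Matrix.trace_smul, key, smul_zero]
end
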